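/- Every cohesive set C has a Π⁰₁-immune subset D with D ≡_T C. -/

import Mathlib

open Classical in
noncomputable def chi (A : Set ℕ) : ℕ →. ℕ := fun n => Part.some (if n ∈ A then 1 else 0)

/-- Functions partial recursive in an oracle `O`. -/
inductive RecursiveInOracle (O : ℕ →. ℕ) : (ℕ →. ℕ) → Prop
  | zero : RecursiveInOracle O (pure 0)
  | succ : RecursiveInOracle O (fun n => Part.some (n + 1))
  | left : RecursiveInOracle O (fun n => Part.some n.unpair.1)
  | right : RecursiveInOracle O (fun n => Part.some n.unpair.2)
  | oracle : RecursiveInOracle O O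
  | pair {f g} : RecursiveInOracle O f → RecursiveInOracle O g →
      RecursiveInOracle O fun n => Nat.pair <$> f n <*> g n
  | comp {f g} : RecursiveInOracle O f → RecursiveInOracle O g →
      RecursiveInOracle O fun n => g n >>= f
  | prec {f g} : RecursiveInOracle O f → RecursiveInOracle O g →
      RecursiveInOracle O (Nat.unpaired fun a n =>
        n.rec (f a) fun y IH => do let i ← IH; g (Nat.pair a (Nat.pair y i)))
  | rfind {f} : RecursiveInOracle O f →
      RecursiveInOracle O fun a => Nat.rfind fun n => (fun m => m = 0) <$> f (Nat.pair a n)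

/-- `A` is Turing reducible to `B`. -/
def TuringRed (A B : Set ℕ) : Prop := RecursiveInOracle (chi B) (chi A)

/-- A total function computable from the oracle `O`. -/
def ComputableInOracle (O : ℕ →. ℕ) (f : ℕ → ℕ) : Prop := RecursiveInOracle O fun n => Part.some (f n)

/-- `S` is computably enumerable in the oracle `O`. -/
def CeIn (O : ℕ →. ℕ) (S : Set ℕ) : Prop :=
  ∃ f : ℕ →. ℕ, RecursiveInOracle O f ∧ ∀ n, n ∈ S ↔ (f n).Dom

/-- The `e`-th c.e. set. -/
def W (e : ℕ) : Set ℕ := {n | ((Denumerable.ofNat Nat.Partrec.Code e).eval n).Dom}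

/-- The halting problem `∅'`. -/
def K0 : Set ℕ := {n | ((Denumerable.ofNat Nat.Partrec.Code n.unpair.1).eval n.unpair.2).Dom}

/-- `C` is cohesive: it is infinite and no c.e. set splits it into two infinite pieces. -/
def Cohesive (C : Set ℕ) : Prop :=
  C.Infinite ∧ ∀ e : ℕ, (W e ∩ C).Finite ∨ ((W e)ᶜ ∩ C).Finite

/-- `S` is `Π⁰₁`-immune: it is infinite and contains no infinite co-c.e. subset. -/
def Pi01Immune (S : Set ℕ) : Prop :=
  S.Infinite ∧ ∀ e : ℕ, (W e)ᶜ ⊆ S → ((W e)ᶜ).Finite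

namespace RecursiveInOracle
variable {O : ℕ →. ℕ}

theorem of_eq {f g : ℕ →. ℕ} (hf : RecursiveInOracle O f) (h : ∀ n, f n = g n) : RecursiveInOracle O g :=
  (funext h : f = g) ▸ hf

theorem of_partrec {f : ℕ →. ℕ} (hf : Nat.Partrec f) : RecursiveInOracle O f := by
  induction hf with
  | zero => exact .zero
  | succ => exact .succ
  | left => exact .left
  | right => exact .right
  | pair _ _ ihf ihg => exact .pair ihf ihg
  | comp _ _ ihf ihg => exact .comp ihf ihg
  | prec _ _ ihf ihg => exact .prec ihf ihg
  | rfind _ ihf => exact .rfind ihf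

end RecursiveInOracle

namespace ComputableInOracle
variable {O : ℕ →. ℕ} {f g c : ℕ → ℕ}

theorem of_eq (hf : ComputableInOracle O f) (h : ∀ n, f n = g n) : ComputableInOracle O g :=
  RecursiveInOracle.of_eq hf fun n => by rw [h]

theorem of_nat_primrec (hf : Nat.Primrec f) : ComputableInOracle O f :=
  (RecursiveInOracle.of_partrec (Nat.Partrec.of_primrec hf)).of_eq fun n => rfl

theorem of_primrec (hf : Primrec f) : ComputableInOracle O f :=
  of_nat_primrec (Primrec.nat_iff.1 hf)

theorem const (m : ℕ) : ComputableInOracle O fun _ => m := of_primrec (Primrec.const m)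

theorem id' : ComputableInOracle O fun n => n := of_primrec Primrec.id

protected theorem comp (hf : ComputableInOracle O f) (hg : ComputableInOracle O g) :
    ComputableInOracle O fun n => f (g n) :=
  (RecursiveInOracle.comp hf hg).of_eq fun n => by simp

protected theorem pair (hf : ComputableInOracle O f) (hg : ComputableInOracle O g) :
    ComputableInOracle O fun n => Nat.pair (f n) (g n) :=
  (RecursiveInOracle.pair hf hg).of_eq fun n => by simp [Seq.seq]

/-- compose a binary primrec function with two oracle-computable arguments -/
theorem comp₂ {h : ℕ → ℕ → ℕ} (hh : Primrec₂ h) (hf : ComputableInOracle O f)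
    (hg : ComputableInOracle O g) : ComputableInOracle O fun n => h (f n) (g n) :=
  (of_primrec (hh.comp (Primrec.fst.comp Primrec.unpair)
    (Primrec.snd.comp Primrec.unpair))).comp (hf.pair hg) |>.of_eq fun n => by simp

protected theorem ite (hc : ComputableInOracle O c) (hf : ComputableInOracle O f) (hg : ComputableInOracle O g) :
    ComputableInOracle O fun n => if c n = 0 then f n else g n := by
  have houter : Primrec fun p : ℕ => if p.unpair.1 = 0 then p.unpair.2.unpair.1
      else p.unpair.2.unpair.2 :=
    Primrec.ite (Primrec.eq.comp (Primrec.fst.comp Primrec.unpair) (Primrec.const 0))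
      ((Primrec.fst.comp Primrec.unpair).comp (Primrec.snd.comp Primrec.unpair))
      ((Primrec.snd.comp Primrec.unpair).comp (Primrec.snd.comp Primrec.unpair))
  exact ((of_primrec houter).comp (hc.pair (hf.pair hg))).of_eq fun n => by simp

theorem prec' (hf : ComputableInOracle O f) (hg : ComputableInOracle O g) :
    ComputableInOracle O fun p => Nat.rec (motive := fun _ => ℕ) (f p.unpair.1)
      (fun y ih => g (Nat.pair p.unpair.1 (Nat.pair y ih))) p.unpair.2 := by
  have key : ∀ a n, (Nat.rec (Part.some (f a))
      (fun y IH => IH.bind fun i => Part.some (g (Nat.pair a (Nat.pair y i)))) n : Part ℕ) =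
      Part.some (Nat.rec (motive := fun _ => ℕ) (f a)
        (fun y ih => g (Nat.pair a (Nat.pair y ih))) n) := by
    intro a n
    induction n with
    | zero => rfl
    | succ n ih => simp [ih]
  refine (RecursiveInOracle.prec hf hg).of_eq fun p => ?_
  simp only [Nat.unpaired, Part.bind_eq_bind] at *
  exact key p.unpair.1 p.unpair.2

theorem rfind_of_spec (hf : ComputableInOracle O f) {g : ℕ → ℕ}
    (h0 : ∀ a, f (Nat.pair a (g a)) = 0)
    (hmin : ∀ a m, m < g a → f (Nat.pair a m) ≠ 0) :
    ComputableInOracle O g := by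
  refine (RecursiveInOracle.rfind hf).of_eq fun a => ?_
  apply Part.eq_some_iff.2
  refine Nat.mem_rfind.2 ?_
  constructor
  · simp [h0 a]
  · intro m hm
    simp [hmin a m hm]

end ComputableInOracle

open Classical in
/-- characteristic function -/
noncomputable def cf (A : Set ℕ) : ℕ → ℕ := fun n => if n ∈ A then 1 else 0

theorem chi_cf (A : Set ℕ) : chi A = fun n => Part.some (cf A n) := rfl

theorem cf_le_one (A : Set ℕ) (n : ℕ) : cf A n ≤ 1 := by
  unfold cf; split <;> simp

theorem cf_eq_one (A : Set ℕ) (n : ℕ) : cf A n = 1 ↔ n ∈ A := by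
  unfold cf; split <;> simp_all

theorem cf_eq_zero (A : Set ℕ) (n : ℕ) : cf A n = 0 ↔ n ∉ A := by
  unfold cf; split <;> simp_all

theorem ComputableInOracle.oracle_cf (A : Set ℕ) : ComputableInOracle (chi A) (cf A) :=
  RecursiveInOracle.oracle

namespace CohPi

/-- least element of `C` greater than `y` -/
noncomputable def nextC (C : Set ℕ) (y : ℕ) : ℕ := sInf {m | m ∈ C ∧ y < m}

section NextC
variable {C : Set ℕ}

theorem nextC_spec (hCi : C.Infinite) (y : ℕ) : nextC C y ∈ C ∧ y < nextC C y := by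
  have : {m | m ∈ C ∧ y < m}.Nonempty := by
    obtain ⟨b, hb, hb2⟩ := hCi.exists_gt y
    exact ⟨b, hb, hb2⟩
  exact Nat.sInf_mem this

theorem nextC_mem (hCi : C.Infinite) (y : ℕ) : nextC C y ∈ C := (nextC_spec hCi y).1
theorem nextC_gt (hCi : C.Infinite) (y : ℕ) : y < nextC C y := (nextC_spec hCi y).2

theorem nextC_min {y z : ℕ} (hz : z ∈ C) (hyz : y < z) : nextC C y ≤ z :=
  Nat.sInf_le ⟨hz, hyz⟩

/-- `nextC` is computable in `chi C`. -/
theorem nextC_cin (hCi : C.Infinite) : ComputableInOracle (chi C) (nextC C) := by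
  have hin : ComputableInOracle (chi C) (fun q : ℕ => 1 - cf C (q.unpair.1 + 1 + q.unpair.2)) := by
    refine ComputableInOracle.comp₂ Primrec.nat_sub (ComputableInOracle.const 1) ?_
    exact (ComputableInOracle.oracle_cf C).comp (ComputableInOracle.of_primrec
      (Primrec.nat_add.comp
        (Primrec.nat_add.comp (Primrec.fst.comp Primrec.unpair) (Primrec.const 1))
        (Primrec.snd.comp Primrec.unpair)))
  have hv : ComputableInOracle (chi C) (fun a => nextC C a - (a + 1)) := by
    refine ComputableInOracle.rfind_of_spec hin ?_ ?_
    · intro a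
      simp only [Nat.unpair_pair]
      have h1 : a + 1 + (nextC C a - (a + 1)) = nextC C a :=
        Nat.add_sub_cancel' (nextC_gt hCi a)
      rw [h1, Nat.sub_eq_zero_iff_le, (cf_eq_one C _).2 (nextC_mem hCi a)]
    · intro a m hm
      simp only [Nat.unpair_pair]
      intro h
      have h1 : cf C (a + 1 + m) = 1 := by
        have := cf_le_one C (a + 1 + m)
        omega
      have h2 : a + 1 + m ∈ C := (cf_eq_one C _).1 h1
      have h3 : nextC C a ≤ a + 1 + m := nextC_min h2 (by omega)
      omega
  refine (ComputableInOracle.comp₂ Primrec.nat_add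
    (ComputableInOracle.comp₂ Primrec.nat_add ComputableInOracle.id' (ComputableInOracle.const 1)) hv).of_eq
    fun a => ?_
  have := nextC_gt hCi a
  omega

end NextC

end CohPi

namespace CohPi

section Sett
variable (C : Set ℕ) (mb : ℕ → ℕ)

/-- stages by which membership below `n` has settled -/
def settSet (n : ℕ) : Set ℕ := {s | ∀ x < n, (mb (Nat.pair s x) = 1 ↔ x ∉ C)}

noncomputable def sett (n : ℕ) : ℕ := sInf (settSet C mb n)

variable {C mb}

theorem settSet_nonempty (hsound : ∀ s x, mb (Nat.pair s x) = 1 → x ∉ C)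
    (hmono : ∀ s t x, s ≤ t → mb (Nat.pair s x) = 1 → mb (Nat.pair t x) = 1)
    (hcompl : ∀ x, x ∉ C → ∃ s, mb (Nat.pair s x) = 1) (n : ℕ) : (settSet C mb n).Nonempty := by
  classical
  have hwx : ∀ x, x ∉ C → mb (Nat.pair ((Finset.range n).sup
      (fun x => if hx : x ∉ C then Classical.choose (hcompl x hx) else 0)) x) = 1 → True :=
    fun _ _ _ => trivial
  refine ⟨(Finset.range n).sup (fun x => if hx : x ∉ C then Classical.choose (hcompl x hx)
    else 0), fun x hx => ?_⟩
  constructor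
  · exact hsound _ x
  · intro hxC
    have h1 : mb (Nat.pair (if hx : x ∉ C then Classical.choose (hcompl x hx) else 0) x) = 1 := by
      rw [dif_pos hxC]
      exact Classical.choose_spec (hcompl x hxC)
    exact hmono _ _ _ (Finset.le_sup (Finset.mem_range.2 hx)) h1

theorem sett_spec (hsound : ∀ s x, mb (Nat.pair s x) = 1 → x ∉ C)
    (hmono : ∀ s t x, s ≤ t → mb (Nat.pair s x) = 1 → mb (Nat.pair t x) = 1)
    (hcompl : ∀ x, x ∉ C → ∃ s, mb (Nat.pair s x) = 1) (n : ℕ) :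
    ∀ x < n, (mb (Nat.pair (sett C mb n) x) = 1 ↔ x ∉ C) :=
  Nat.sInf_mem (settSet_nonempty hsound hmono hcompl n)

theorem sett_min {n s : ℕ} (hs : s ∈ settSet C mb n) : sett C mb n ≤ s :=
  Nat.sInf_le hs

end Sett

section Msum
variable (C : Set ℕ) (mb : ℕ → ℕ)

noncomputable def gErr : ℕ → ℕ := fun t =>
  t.unpair.2.unpair.2 +
    (if mb (Nat.pair t.unpair.1 t.unpair.2.unpair.1) = 1 - cf C t.unpair.2.unpair.1 then 0 else 1)

noncomputable def msumFn : ℕ → ℕ := fun p =>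
  Nat.rec (motive := fun _ => ℕ) 0
    (fun y ih => gErr C mb (Nat.pair p.unpair.1 (Nat.pair y ih))) p.unpair.2

variable {C mb}

theorem errcond (hbool : ∀ p, mb p = 0 ∨ mb p = 1) (s x : ℕ) :
    (mb (Nat.pair s x) = 1 - cf C x) ↔ (mb (Nat.pair s x) = 1 ↔ x ∉ C) := by
  rcases hbool (Nat.pair s x) with h | h <;> by_cases hx : x ∈ C <;>
    simp [h, (cf_eq_one C x).2, hx, cf, if_pos, if_neg] <;> simp [hx]

theorem msumFn_eq_zero (hbool : ∀ p, mb p = 0 ∨ mb p = 1) (s n : ℕ) :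
    msumFn C mb (Nat.pair s n) = 0 ↔ ∀ x < n, (mb (Nat.pair s x) = 1 ↔ x ∉ C) := by
  unfold msumFn
  simp only [Nat.unpair_pair]
  induction n with
  | zero => simp
  | succ n ih =>
    rw [show (Nat.rec (motive := fun _ => ℕ) 0
        (fun y ih => gErr C mb (Nat.pair s (Nat.pair y ih))) (n+1)) =
      gErr C mb (Nat.pair s (Nat.pair n (Nat.rec (motive := fun _ => ℕ) 0
        (fun y ih => gErr C mb (Nat.pair s (Nat.pair y ih))) n))) from rfl]
    have hg : ∀ R : ℕ, gErr C mb (Nat.pair s (Nat.pair n R)) =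
        R + (if mb (Nat.pair s n) = 1 - cf C n then 0 else 1) := by
      intro R; unfold gErr; simp only [Nat.unpair_pair]
    rw [hg]
    constructor
    · intro hsum x hx
      have h1 : (Nat.rec (motive := fun _ => ℕ) 0 (fun y ih =>
          gErr C mb (Nat.pair s (Nat.pair y ih))) n) = 0 := by omega
      rcases Nat.lt_succ_iff_lt_or_eq.1 hx with h2 | h2
      · exact (ih.1 h1) x h2
      · subst h2
        have h3 : (if mb (Nat.pair s x) = 1 - cf C x then 0 else 1) = 0 := by omega
        have h4 : mb (Nat.pair s x) = 1 - cf C x := by by_contra hc; simp [hc] at h3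
        exact (errcond hbool s x).1 h4
    · intro h
      have h1 : (Nat.rec (motive := fun _ => ℕ) 0 (fun y ih =>
          gErr C mb (Nat.pair s (Nat.pair y ih))) n) = 0 :=
        ih.2 fun x hx => h x (hx.trans (Nat.lt_succ_self n))
      have h2 : mb (Nat.pair s n) = 1 - cf C n :=
        (errcond hbool s n).2 (h n (Nat.lt_succ_self n))
      simp [h1, h2]

theorem msumFn_cin (hmbP : Primrec mb) : ComputableInOracle (chi C) (msumFn C mb) := by
  have hgerr : ComputableInOracle (chi C) (gErr C mb) := by
    refine ComputableInOracle.comp₂ Primrec.nat_add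
      (ComputableInOracle.of_primrec ((Primrec.snd.comp Primrec.unpair).comp
        (Primrec.snd.comp Primrec.unpair))) ?_
    have heq : Primrec₂ (fun a b : ℕ => if a = b then (0:ℕ) else 1) :=
      Primrec.ite (Primrec.eq.comp Primrec.fst Primrec.snd)
        (Primrec.const 0) (Primrec.const 1)
    refine ComputableInOracle.comp₂ heq ?_ ?_
    · exact ComputableInOracle.of_primrec (hmbP.comp (Primrec₂.natPair.comp
        (Primrec.fst.comp Primrec.unpair)
        ((Primrec.fst.comp Primrec.unpair).comp (Primrec.snd.comp Primrec.unpair))))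
    · exact ComputableInOracle.comp₂ Primrec.nat_sub (ComputableInOracle.const 1)
        ((ComputableInOracle.oracle_cf C).comp (ComputableInOracle.of_primrec
          ((Primrec.fst.comp Primrec.unpair).comp (Primrec.snd.comp Primrec.unpair))))
  exact ComputableInOracle.prec' (ComputableInOracle.const 0) hgerr


end Msum

end CohPi

namespace CohPi

section DFun
variable {C : Set ℕ} {mb : ℕ → ℕ}

theorem sett_cin (hmbP : Primrec mb)
    (hsound : ∀ s x, mb (Nat.pair s x) = 1 → x ∉ C)
    (hmono : ∀ s t x, s ≤ t → mb (Nat.pair s x) = 1 → mb (Nat.pair t x) = 1)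
    (hcompl : ∀ x, x ∉ C → ∃ s, mb (Nat.pair s x) = 1)
    (hbool : ∀ p, mb p = 0 ∨ mb p = 1) :
    ComputableInOracle (chi C) (sett C mb) := by
  have hswap : ComputableInOracle (chi C) (fun q : ℕ => msumFn C mb (Nat.pair q.unpair.2 q.unpair.1)) :=
    (msumFn_cin hmbP).comp (ComputableInOracle.of_primrec (Primrec₂.natPair.comp
      (Primrec.snd.comp Primrec.unpair) (Primrec.fst.comp Primrec.unpair)))
  refine ComputableInOracle.rfind_of_spec hswap ?_ ?_
  · intro a
    simp only [Nat.unpair_pair]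
    exact (msumFn_eq_zero hbool _ _).2 (sett_spec hsound hmono hcompl a)
  · intro a m hm hc
    simp only [Nat.unpair_pair] at hc
    have h1 : m ∈ settSet C mb a := (msumFn_eq_zero hbool _ _).1 hc
    exact absurd (sett_min h1) (by omega)

variable (C mb) in
noncomputable def dfun : ℕ → ℕ := fun n =>
  Nat.rec (motive := fun _ => ℕ) (nextC C (nextC C (sett C mb 0)))
    (fun y prev => nextC C (nextC C (max prev (sett C mb (y + 1))))) n

theorem dfun_succ (n : ℕ) :
    dfun C mb (n + 1) = nextC C (nextC C (max (dfun C mb n) (sett C mb (n + 1)))) := rfl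

theorem dfun_mem (hCi : C.Infinite) (n : ℕ) : dfun C mb n ∈ C := by
  cases n with
  | zero => exact nextC_mem hCi _
  | succ n => rw [dfun_succ]; exact nextC_mem hCi _

theorem dfun_lt_succ (hCi : C.Infinite) (n : ℕ) : dfun C mb n < dfun C mb (n + 1) := by
  rw [dfun_succ]
  calc dfun C mb n ≤ max (dfun C mb n) (sett C mb (n + 1)) := le_max_left _ _
    _ < nextC C _ := nextC_gt hCi _
    _ < nextC C _ := nextC_gt hCi _

theorem dfun_strictMono (hCi : C.Infinite) : StrictMono (dfun C mb) :=
  strictMono_nat_of_lt_succ (dfun_lt_succ hCi)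

theorem sett_lt_dfun (hCi : C.Infinite) (n : ℕ) : sett C mb n < dfun C mb n := by
  cases n with
  | zero =>
    calc sett C mb 0 < nextC C (sett C mb 0) := nextC_gt hCi _
      _ < nextC C _ := nextC_gt hCi _
  | succ n =>
    rw [dfun_succ]
    calc sett C mb (n + 1) ≤ max (dfun C mb n) (sett C mb (n + 1)) := le_max_right _ _
      _ < nextC C _ := nextC_gt hCi _
      _ < nextC C _ := nextC_gt hCi _

theorem dfun_cin (hCi : C.Infinite) (hmbP : Primrec mb)
    (hsound : ∀ s x, mb (Nat.pair s x) = 1 → x ∉ C)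
    (hmono : ∀ s t x, s ≤ t → mb (Nat.pair s x) = 1 → mb (Nat.pair t x) = 1)
    (hcompl : ∀ x, x ∉ C → ∃ s, mb (Nat.pair s x) = 1)
    (hbool : ∀ p, mb p = 0 ∨ mb p = 1) :
    ComputableInOracle (chi C) (dfun C mb) := by
  have hst := sett_cin hmbP hsound hmono hcompl hbool
  have hnext := nextC_cin hCi
  have hg : ComputableInOracle (chi C) (fun t : ℕ => nextC C (nextC C
      (max t.unpair.2.unpair.2 (sett C mb (t.unpair.2.unpair.1 + 1))))) := by
    refine hnext.comp (hnext.comp (ComputableInOracle.comp₂ Primrec.nat_max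
      (ComputableInOracle.of_primrec ((Primrec.snd.comp Primrec.unpair).comp
        (Primrec.snd.comp Primrec.unpair))) (hst.comp (ComputableInOracle.of_primrec
        (Primrec.succ.comp ((Primrec.fst.comp Primrec.unpair).comp
          (Primrec.snd.comp Primrec.unpair)))))))
  have hP := ComputableInOracle.prec' (ComputableInOracle.const (dfun C mb 0)) hg
  have hcomp := hP.comp (ComputableInOracle.of_primrec
    (Primrec₂.natPair.comp (Primrec.const 0) Primrec.id))
  refine hcomp.of_eq fun n => ?_
  simp only [Nat.unpair_pair]
  rfl

end DFun

end CohPi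

namespace CohPi

section Reductions
variable {C : Set ℕ} {mb : ℕ → ℕ}

theorem hitSem (x : ℕ) : ∀ n : ℕ,
    (Nat.rec (motive := fun _ => ℕ) 0
      (fun y ih => max ih (if dfun C mb y = x then 1 else 0)) n) =
    (if ∃ k < n, dfun C mb k = x then 1 else 0) := by
  intro n
  induction n with
  | zero => simp
  | succ n ih =>
    rw [show (Nat.rec (motive := fun _ => ℕ) 0
        (fun y ih => max ih (if dfun C mb y = x then 1 else 0)) (n + 1)) =
      max ((Nat.rec (motive := fun _ => ℕ) 0
        (fun y ih => max ih (if dfun C mb y = x then 1 else 0)) n))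
        (if dfun C mb n = x then 1 else 0) from rfl, ih]
    have hnew : (∃ k < n + 1, dfun C mb k = x) ↔
        ((∃ k < n, dfun C mb k = x) ∨ dfun C mb n = x) := by
      constructor
      · rintro ⟨k, hk, hk2⟩
        rcases Nat.lt_succ_iff_lt_or_eq.1 hk with h | h
        · exact Or.inl ⟨k, h, hk2⟩
        · exact Or.inr (h ▸ hk2)
      · rintro (⟨k, hk, hk2⟩ | h)
        · exact ⟨k, hk.trans (Nat.lt_succ_self n), hk2⟩
        · exact ⟨n, Nat.lt_succ_self n, h⟩
    by_cases h1 : ∃ k < n, dfun C mb k = x <;> by_cases h2 : dfun C mb n = x <;>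
      simp only [hnew] <;> simp [h1, h2]

theorem cfD_cin (hCi : C.Infinite) (hmbP : Primrec mb)
    (hsound : ∀ s x, mb (Nat.pair s x) = 1 → x ∉ C)
    (hmono : ∀ s t x, s ≤ t → mb (Nat.pair s x) = 1 → mb (Nat.pair t x) = 1)
    (hcompl : ∀ x, x ∉ C → ∃ s, mb (Nat.pair s x) = 1)
    (hbool : ∀ p, mb p = 0 ∨ mb p = 1) :
    ComputableInOracle (chi C) (cf (Set.range (dfun C mb))) := by
  have hd := dfun_cin hCi hmbP hsound hmono hcompl hbool
  have heq01 : Primrec₂ (fun a b : ℕ => if a = b then (1:ℕ) else 0) :=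
    Primrec.ite (Primrec.eq.comp Primrec.fst Primrec.snd) (Primrec.const 1) (Primrec.const 0)
  have hg : ComputableInOracle (chi C) (fun t : ℕ => max t.unpair.2.unpair.2
      (if dfun C mb t.unpair.2.unpair.1 = t.unpair.1 then 1 else 0)) := by
    refine ComputableInOracle.comp₂ Primrec.nat_max (ComputableInOracle.of_primrec
      ((Primrec.snd.comp Primrec.unpair).comp (Primrec.snd.comp Primrec.unpair))) ?_
    exact ComputableInOracle.comp₂ heq01 (hd.comp (ComputableInOracle.of_primrec
      ((Primrec.fst.comp Primrec.unpair).comp (Primrec.snd.comp Primrec.unpair))))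
      (ComputableInOracle.of_primrec (Primrec.fst.comp Primrec.unpair))
  have hP := ComputableInOracle.prec' (ComputableInOracle.const 0) hg
  have hcomp := hP.comp (ComputableInOracle.of_primrec
    (Primrec₂.natPair.comp Primrec.id (Primrec.succ)))
  refine hcomp.of_eq fun x => ?_
  simp only [Nat.unpair_pair, id_eq, Nat.succ_eq_add_one]
  have hh : (Nat.rec (motive := fun _ => ℕ) 0
      (fun y ih => max ih (if dfun C mb y = x then 1 else 0)) (x + 1)) =
      cf (Set.range (dfun C mb)) x := by
    rw [hitSem x (x + 1)]
    by_cases hx : x ∈ Set.range (dfun C mb)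
    · obtain ⟨k, hk⟩ := hx
      have hkx : k ≤ x := hk ▸ (dfun_strictMono hCi).le_apply
      have hex : ∃ j < x + 1, dfun C mb j = x := ⟨k, by omega, hk⟩
      rw [if_pos hex]
      exact ((cf_eq_one (Set.range (dfun C mb)) x).2 ⟨k, hk⟩).symm
    · rw [if_neg (by rintro ⟨k, _, hk2⟩; exact hx ⟨k, hk2⟩)]
      exact ((cf_eq_zero (Set.range (dfun C mb)) x).2 hx).symm
  exact hh

theorem nextD_dfun (hCi : C.Infinite) (n : ℕ) :
    nextC (Set.range (dfun C mb)) (dfun C mb n) = dfun C mb (n + 1) := by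
  have hDi : (Set.range (dfun C mb)).Infinite :=
    Set.infinite_range_of_injective (dfun_strictMono hCi).injective
  have h1 : nextC (Set.range (dfun C mb)) (dfun C mb n) ≤ dfun C mb (n + 1) :=
    nextC_min ⟨n + 1, rfl⟩ (dfun_lt_succ hCi n)
  obtain ⟨k, hk⟩ := nextC_mem hDi (dfun C mb n)
  have h2 : dfun C mb n < dfun C mb k := by rw [hk]; exact nextC_gt hDi _
  have h3 : n < k := (dfun_strictMono hCi).lt_iff_lt.1 h2
  have h4 : dfun C mb (n + 1) ≤ dfun C mb k := (dfun_strictMono hCi).monotone h3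
  omega

theorem dfun_cin_D (hCi : C.Infinite) :
    ComputableInOracle (chi (Set.range (dfun C mb))) (dfun C mb) := by
  have hDi : (Set.range (dfun C mb)).Infinite :=
    Set.infinite_range_of_injective (dfun_strictMono hCi).injective
  have hnextD := nextC_cin hDi
  have hg : ComputableInOracle (chi (Set.range (dfun C mb)))
      (fun t : ℕ => nextC (Set.range (dfun C mb)) t.unpair.2.unpair.2) :=
    hnextD.comp (ComputableInOracle.of_primrec ((Primrec.snd.comp Primrec.unpair).comp
      (Primrec.snd.comp Primrec.unpair)))
  have hP := ComputableInOracle.prec' (ComputableInOracle.const (dfun C mb 0)) hg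
  have hcomp := hP.comp (ComputableInOracle.of_primrec
    (Primrec₂.natPair.comp (Primrec.const 0) Primrec.id))
  refine hcomp.of_eq fun n => ?_
  simp only [Nat.unpair_pair, id_eq]
  induction n with
  | zero => rfl
  | succ n ih =>
    rw [show (Nat.rec (motive := fun _ => ℕ) (dfun C mb 0)
        (fun y ih => nextC (Set.range (dfun C mb)) ih) (n + 1)) =
      nextC (Set.range (dfun C mb)) ((Nat.rec (motive := fun _ => ℕ) (dfun C mb 0)
        (fun y ih => nextC (Set.range (dfun C mb)) ih) n)) from rfl, ih]
    exact nextD_dfun hCi n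

theorem cfC_cin_D (hCi : C.Infinite) (hmbP : Primrec mb)
    (hsound : ∀ s x, mb (Nat.pair s x) = 1 → x ∉ C)
    (hmono : ∀ s t x, s ≤ t → mb (Nat.pair s x) = 1 → mb (Nat.pair t x) = 1)
    (hcompl : ∀ x, x ∉ C → ∃ s, mb (Nat.pair s x) = 1)
    (hbool : ∀ p, mb p = 0 ∨ mb p = 1) :
    ComputableInOracle (chi (Set.range (dfun C mb))) (cf C) := by
  have hd := dfun_cin_D (mb := mb) hCi
  have htarget : ComputableInOracle (chi (Set.range (dfun C mb)))
      (fun x : ℕ => 1 - mb (Nat.pair (dfun C mb (x + 1)) x)) := by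
    refine ComputableInOracle.comp₂ Primrec.nat_sub (ComputableInOracle.const 1) ?_
    exact (ComputableInOracle.of_primrec (Primrec.nat_iff.2 (Primrec.nat_iff.1 hmbP))).comp
      ((hd.comp (ComputableInOracle.of_primrec Primrec.succ)).pair ComputableInOracle.id')
  refine htarget.of_eq fun x => ?_
  by_cases hx : x ∈ C
  · have h1 : mb (Nat.pair (dfun C mb (x + 1)) x) = 0 := by
      rcases hbool (Nat.pair (dfun C mb (x + 1)) x) with h | h
      · exact h
      · exact absurd (hsound _ _ h) (by simp [hx])
    rw [h1, (cf_eq_one C x).2 hx]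
  · have h1 : mb (Nat.pair (sett C mb (x + 1)) x) = 1 :=
      (sett_spec hsound hmono hcompl (x + 1) x (Nat.lt_succ_self x)).2 hx
    have h2 : mb (Nat.pair (dfun C mb (x + 1)) x) = 1 :=
      hmono _ _ _ (le_of_lt (sett_lt_dfun hCi (x + 1))) h1
    rw [h2, (cf_eq_zero C x).2 hx]

end Reductions

end CohPi

namespace CohPi

theorem construction {C : Set ℕ} {mb : ℕ → ℕ} (hCi : C.Infinite) (hmbP : Primrec mb)
    (hsound : ∀ s x, mb (Nat.pair s x) = 1 → x ∉ C)
    (hmono : ∀ s t x, s ≤ t → mb (Nat.pair s x) = 1 → mb (Nat.pair t x) = 1)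
    (hcompl : ∀ x, x ∉ C → ∃ s, mb (Nat.pair s x) = 1)
    (hbool : ∀ p, mb p = 0 ∨ mb p = 1) :
    ∃ D : Set ℕ, D ⊆ C ∧ D.Infinite ∧ (C \ D).Infinite ∧
      RecursiveInOracle (chi C) (chi D) ∧ RecursiveInOracle (chi D) (chi C) := by
  refine ⟨Set.range (dfun C mb), ?_, ?_, ?_, ?_, ?_⟩
  · rintro _ ⟨n, rfl⟩; exact dfun_mem hCi n
  · exact Set.infinite_range_of_injective (dfun_strictMono hCi).injective
  · have hsk1 : ∀ n, dfun C mb n < nextC C (max (dfun C mb n) (sett C mb (n + 1))) :=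
      fun n => lt_of_le_of_lt (le_max_left _ _) (nextC_gt hCi _)
    have hsk2 : ∀ n, nextC C (max (dfun C mb n) (sett C mb (n + 1))) < dfun C mb (n + 1) :=
      fun n => by rw [dfun_succ]; exact nextC_gt hCi _
    have hmem : ∀ n, nextC C (max (dfun C mb n) (sett C mb (n + 1))) ∈
        C \ Set.range (dfun C mb) := by
      intro n
      refine ⟨nextC_mem hCi _, ?_⟩
      rintro ⟨k, hk⟩
      rcases lt_or_ge k (n + 1) with h | h
      · have h2 : dfun C mb k ≤ dfun C mb n :=
          (dfun_strictMono hCi).monotone (Nat.lt_succ_iff.1 h)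
        have := hsk1 n; omega
      · have h2 : dfun C mb (n + 1) ≤ dfun C mb k := (dfun_strictMono hCi).monotone h
        have := hsk2 n; omega
    have hinj : Function.Injective
        (fun n => nextC C (max (dfun C mb n) (sett C mb (n + 1)))) := by
      have hsm : StrictMono (fun n => nextC C (max (dfun C mb n) (sett C mb (n + 1)))) := by
        apply strictMono_nat_of_lt_succ
        intro n
        calc nextC C (max (dfun C mb n) (sett C mb (n + 1))) < dfun C mb (n + 1) := hsk2 n
          _ ≤ max (dfun C mb (n + 1)) (sett C mb (n + 2)) := le_max_left _ _
          _ < nextC C _ := nextC_gt hCi _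
      exact hsm.injective
    exact Set.infinite_of_injective_forall_mem hinj hmem
  · exact cfD_cin hCi hmbP hsound hmono hcompl hbool
  · exact cfC_cin_D hCi hmbP hsound hmono hcompl hbool

theorem primrecPred_of_iff {p q : ℕ → Prop} [DecidablePred p] [DecidablePred q]
    (hp : PrimrecPred p) (h : ∀ a, q a ↔ p a) : PrimrecPred q := by
  exact hp.of_eq fun a => (h a).symm

theorem finset_mem_primrec (s : Finset ℕ) : PrimrecPred fun x : ℕ => x ∈ s := by
  classical
  induction s using Finset.induction_on with
  | empty =>
    refine primrecPred_of_iff (p := fun _ : ℕ => False) ?_ (by simp)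
    unfold PrimrecPred
    refine ⟨inferInstance, ?_⟩
    have heq : (fun _ : ℕ => decide False) = fun _ : ℕ => false := by funext a; simp
    rw [heq]
    exact Primrec.const false
  | @insert a t ha ih =>
    refine primrecPred_of_iff (p := fun x : ℕ => x = a ∨ x ∈ t)
      (PrimrecPred.or (Primrec.eq.comp Primrec.id (Primrec.const a)) ih) ?_
    intro x
    simp [Finset.mem_insert]

end CohPi

open Nat.Partrec (Code)
open Nat.Partrec.Code

theorem cohesive_has_pi01immune_subset' (C : Set ℕ) (hC : Cohesive C) :
    ∃ D : Set ℕ, D ⊆ C ∧ Pi01Immune D ∧ TuringRed D C ∧ TuringRed C D := by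
  classical
  obtain ⟨hCi, hcoh⟩ := hC
  by_cases himm : ∀ e : ℕ, (W e)ᶜ ⊆ C → ((W e)ᶜ).Finite
  · exact ⟨C, subset_rfl, ⟨hCi, himm⟩, RecursiveInOracle.oracle, RecursiveInOracle.oracle⟩
  push_neg at himm
  obtain ⟨e, hsub, hinf⟩ := himm
  have hWC : (W e ∩ C).Finite := by
    rcases hcoh e with h | h
    · exact h
    · exact absurd (by rwa [Set.inter_eq_left.2 hsub] at h) hinf
  set c : Code := Denumerable.ofNat Code e with hc
  set Fs : Finset ℕ := hWC.toFinset with hFs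
  set P : ℕ → Prop :=
    fun q => ((evaln q.unpair.1 c q.unpair.2).isSome = true) ∧ ¬(q.unpair.2 ∈ Fs) with hP
  set mb : ℕ → ℕ := fun q => if P q then 1 else 0 with hmb
  have hbool : ∀ p, mb p = 0 ∨ mb p = 1 := by
    intro p
    by_cases hp : P p
    · right; simp [hmb, if_pos hp]
    · left; simp [hmb, if_neg hp]
  have hone : ∀ q, mb q = 1 ↔ P q := by
    intro q
    by_cases hq : P q
    · simpa [hmb, if_pos hq] using hq
    · simp [hmb, if_neg hq, hq]
  have hWe : ∀ x, x ∈ W e ↔ (eval c x).Dom := fun x => Iff.rfl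
  have hsound : ∀ s x, mb (Nat.pair s x) = 1 → x ∉ C := by
    intro s x h
    obtain ⟨h1, h2⟩ := (hone _).1 h
    simp only [Nat.unpair_pair] at h1 h2
    intro hxC
    obtain ⟨a, ha⟩ := Option.isSome_iff_exists.1 h1
    have hxW : x ∈ W e := by
      rw [hWe]
      exact Part.dom_iff_mem.2 ⟨a, evaln_sound (by rw [ha]; rfl : a ∈ evaln s c x)⟩
    exact h2 (hWC.mem_toFinset.2 ⟨hxW, hxC⟩)
  have hmono : ∀ s t x, s ≤ t → mb (Nat.pair s x) = 1 → mb (Nat.pair t x) = 1 := by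
    intro s t x hst h
    obtain ⟨h1, h2⟩ := (hone _).1 h
    simp only [Nat.unpair_pair] at h1 h2
    refine (hone _).2 ⟨?_, by simpa using h2⟩
    simp only [Nat.unpair_pair]
    obtain ⟨a, ha⟩ := Option.isSome_iff_exists.1 h1
    exact Option.isSome_iff_exists.2 ⟨a, evaln_mono hst (by rw [ha]; rfl : a ∈ evaln s c x)⟩
  have hcompl : ∀ x, x ∉ C → ∃ s, mb (Nat.pair s x) = 1 := by
    intro x hx
    have hxW : x ∈ W e := by
      by_contra hxW
      exact hx (hsub hxW)
    obtain ⟨a, ha⟩ := Part.dom_iff_mem.1 ((hWe x).1 hxW)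
    obtain ⟨k, hk⟩ := evaln_complete.1 ha
    refine ⟨k, (hone _).2 ⟨?_, ?_⟩⟩
    · simp only [Nat.unpair_pair]
      exact Option.isSome_iff_exists.2 ⟨a, hk⟩
    · simp only [Nat.unpair_pair]
      intro hmem
      exact hx (hWC.mem_toFinset.1 hmem).2
  have hmbP : Primrec mb := by
    have hev : Primrec (fun q : ℕ => evaln q.unpair.1 c q.unpair.2) :=
      primrec_evaln.comp (Primrec.pair (Primrec.pair (Primrec.fst.comp Primrec.unpair)
        (Primrec.const c)) (Primrec.snd.comp Primrec.unpair))
    have hp1 : PrimrecPred (fun q : ℕ => (evaln q.unpair.1 c q.unpair.2).isSome = true) :=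
      Primrec.eq.comp (Primrec.option_isSome.comp hev) (Primrec.const true)
    have hp2 : PrimrecPred (fun q : ℕ => ¬(q.unpair.2 ∈ Fs)) :=
      PrimrecPred.not ((CohPi.finset_mem_primrec Fs).comp (Primrec.snd.comp Primrec.unpair))
    have hPP : PrimrecPred P := hp1.and hp2
    have h2 : Primrec (fun q : ℕ => if P q then 1 else 0) :=
      Primrec.ite hPP (Primrec.const 1) (Primrec.const 0)
    have h3 : mb = fun q : ℕ => if P q then 1 else 0 := by
      funext q
      by_cases hq : P q
      · simp [hmb, if_pos hq]
      · simp [hmb, if_neg hq]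
    rwa [h3]
  obtain ⟨D, hDsub, hDinf, hCDinf, hred1, hred2⟩ :=
    CohPi.construction hCi hmbP hsound hmono hcompl hbool
  refine ⟨D, hDsub, ⟨hDinf, ?_⟩, hred1, hred2⟩
  intro e' hsub'
  rcases hcoh e' with h | h
  · exfalso
    have hsubCD : C \ D ⊆ W e' ∩ C := by
      intro x hx
      refine ⟨?_, hx.1⟩
      by_contra hxW
      exact hx.2 (hsub' hxW)
    exact (h.subset hsubCD).not_infinite hCDinf
  · rwa [Set.inter_eq_left.2 (hsub'.trans hDsub)] at h

/-- Every cohesive set `C` has a `Π⁰₁`-immune subset `D ≡_T C`. -/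
theorem cohesive_has_pi01immune_subset (C : Set ℕ) (hC : Cohesive C) :
    ∃ D : Set ℕ, D ⊆ C ∧ Pi01Immune D ∧ TuringRed D C ∧ TuringRed C D :=
  cohesive_has_pi01immune_subset' C hC
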